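/- Let k ≥ 2 be an integer, and suppose that for all real y with 1 < y ≤ 2k one has P(2k, y) ≤ 2y/log y, where P(x,y) = π(x) - π(x-y) counts primes in (x-y, x]. Then the sum over primes p with k ≤ p ≤ 2k-1 of 1/(2k - p) is at most 2/(3 log 2) + 2 log log k + 2 + 2/log k. -/

import Mathlib

open Real Finset

/-- `P x y = π(x) - π(x - y)` counts primes in `(x - y, x]`, with `π` evaluated at
natural floors. -/
noncomputable def primesInShortInterval (x y : ℝ) : ℝ :=
  (Nat.primeCounting ⌊x⌋₊ : ℝ) - (Nat.primeCounting ⌊x - y⌋₊ : ℝ)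

lemma one_lt_log_three : 1 < Real.log 3 := by
  have h := Real.exp_one_lt_d9
  rw [show (1:ℝ) = Real.log (Real.exp 1) by simp]
  exact Real.log_lt_log (Real.exp_pos 1) (by norm_num at h ⊢; linarith)

lemma log_sub_log_ge (a : ℝ) (ha : 1 ≤ a) :
    1/(a+1) ≤ Real.log (a+1) - Real.log a := by
  have h0 : (0:ℝ) < a := by linarith
  have h1 : (0:ℝ) < a + 1 := by linarith
  have h := Real.log_le_sub_one_of_pos (show (0:ℝ) < a/(a+1) by positivity)
  rw [Real.log_div (ne_of_gt h0) (ne_of_gt h1)] at h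
  have : a/(a+1) - 1 = -(1/(a+1)) := by field_simp; ring
  linarith [this ▸ h]

lemma loglog_step (a : ℝ) (ha : 3 ≤ a) :
    1/((a+1) * Real.log (a+2)) ≤ Real.log (Real.log (a+1)) - Real.log (Real.log a) := by
  have hla : 1 < Real.log a :=
    lt_of_lt_of_le one_lt_log_three (Real.log_le_log (by norm_num) ha)
  have hlb : Real.log a < Real.log (a+1) := Real.log_lt_log (by linarith) (by linarith)
  have hlc : Real.log (a+1) ≤ Real.log (a+2) := Real.log_le_log (by linarith) (by linarith)
  have hlb0 : 0 < Real.log (a+1) := by linarith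
  have h := Real.log_le_sub_one_of_pos (show (0:ℝ) < Real.log a / Real.log (a+1) by positivity)
  rw [Real.log_div (by linarith) (ne_of_gt hlb0)] at h
  have key : (Real.log (a+1) - Real.log a) / Real.log (a+1)
      ≤ Real.log (Real.log (a+1)) - Real.log (Real.log a) := by
    have : Real.log a / Real.log (a+1) - 1
        = -((Real.log (a+1) - Real.log a) / Real.log (a+1)) := by field_simp; ring
    linarith [this ▸ h]
  have step := log_sub_log_ge a (by linarith)
  calc 1/((a+1) * Real.log (a+2)) ≤ 1/((a+1) * Real.log (a+1)) := by gcongr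
      _ = (1/(a+1)) / Real.log (a+1) := (div_div 1 _ _).symm
      _ ≤ (Real.log (a+1) - Real.log a) / Real.log (a+1) := by gcongr
      _ ≤ _ := key

lemma card_split (p : ℕ → Prop) [DecidablePred p] (a b : ℕ) (hab : a ≤ b) :
    #((range a).filter p) + #((Ico a b).filter p) = #((range b).filter p) := by
  rw [range_eq_Ico, range_eq_Ico, ← Finset.Ico_union_Ico_eq_Ico (Nat.zero_le a) hab,
    filter_union, card_union_of_disjoint]
  exact disjoint_filter_filter (Finset.Ico_disjoint_Ico_consecutive 0 a b)

lemma count_bound (k : ℕ) (hk : 2 ≤ k)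
    (hMont : ∀ y : ℝ, 1 < y → y ≤ 2 * k →
      primesInShortInterval (2 * k) y ≤ 2 * y / Real.log y)
    (m : ℕ) (h1 : 1 ≤ m) (h2 : m ≤ 2*k - 1) :
    (∑ i ∈ range m, (if (2*k - (i+1)).Prime then (1:ℝ) else 0))
      ≤ 2 * ((m:ℝ)+1) / Real.log ((m:ℝ)+1) := by
  have hsum : (∑ i ∈ range m, (if (2*k - (i+1)).Prime then (1:ℝ) else 0))
      = (#((range m).filter (fun i => (2*k - (i+1)).Prime)) : ℝ) := by
    rw [Finset.sum_boole]
  have hcard : #((range m).filter (fun i => (2*k - (i+1)).Prime))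
      ≤ #((Ico (2*k - m) (2*k+1)).filter Nat.Prime) := by
    apply Finset.card_le_card_of_injOn (fun i => 2*k - (i+1))
    · intro i hi
      simp only [mem_coe, mem_filter, mem_range] at hi
      simp only [mem_coe, mem_filter, mem_Ico]
      exact ⟨⟨by omega, by omega⟩, hi.2⟩
    · intro i hi j hj hij
      simp only [coe_filter, Set.mem_setOf_eq, mem_range] at hi hj
      change 2*k - (i+1) = 2*k - (j+1) at hij
      omega
  have hpi : Nat.primeCounting (2*k) =
      Nat.primeCounting (2*k - m - 1) + #((Ico (2*k - m) (2*k+1)).filter Nat.Prime) := by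
    have e1 : Nat.primeCounting (2*k) = #((range (2*k+1)).filter Nat.Prime) := by
      rw [Nat.primeCounting, Nat.primeCounting', Nat.count_eq_card_filter_range]
    have e2 : Nat.primeCounting (2*k - m - 1) = #((range (2*k - m)).filter Nat.Prime) := by
      have h3 : 2*k - m - 1 + 1 = 2*k - m := by omega
      rw [Nat.primeCounting, Nat.primeCounting', h3, Nat.count_eq_card_filter_range]
    have h4 := card_split Nat.Prime (2*k - m) (2*k+1) (by omega)
    rw [e1, e2, ← h4]
  have hc : ((2*k - m - 1 : ℕ):ℝ) = 2*(k:ℝ) - ((m:ℝ)+1) := by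
    have h3 : 2*k - m - 1 = 2*k - (m+1) := by omega
    rw [h3, Nat.cast_sub (by omega)]
    push_cast; ring
  have hP : primesInShortInterval (2*k) ((m:ℝ)+1)
      = (#((Ico (2*k - m) (2*k+1)).filter Nat.Prime) : ℝ) := by
    unfold primesInShortInterval
    have f1 : ⌊(2 * (k:ℝ))⌋₊ = 2*k := by
      rw [show (2 * (k:ℝ)) = ((2*k : ℕ) : ℝ) by push_cast; ring, Nat.floor_natCast]
    have f2 : ⌊(2 * (k:ℝ) - ((m:ℝ)+1))⌋₊ = 2*k - m - 1 := by
      rw [← hc, Nat.floor_natCast]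
    rw [f1, f2, hpi]
    push_cast
    ring
  have hM := hMont ((m:ℝ)+1)
    (by
      have h5 : (1:ℝ) ≤ m := by exact_mod_cast h1
      linarith)
    (by exact_mod_cast (show (m+1:ℕ) ≤ 2*k by omega))
  rw [hsum]
  refine le_trans ?_ hM
  rw [hP]
  exact_mod_cast hcard

theorem sum_inv_two_k_sub_p_le (k : ℕ) (hk : 2 ≤ k)
    (hMont : ∀ y : ℝ, 1 < y → y ≤ 2 * k →
      primesInShortInterval (2 * k) y ≤ 2 * y / Real.log y) :
    ∑ p ∈ (Finset.Icc k (2 * k - 1)).filter Nat.Prime, (1 : ℝ) / (2 * k - p) ≤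
      2 / (3 * Real.log 2) + 2 * Real.log (Real.log k) + 2 + 2 / Real.log k := by
  have hl2 : 0 < Real.log 2 := Real.log_pos (by norm_num)
  have hl2' : Real.log 2 ≤ 1 := by
    have := Real.log_le_sub_one_of_pos (show (0:ℝ) < 2 by norm_num)
    linarith
  have hl3 := one_lt_log_three
  by_cases hk5 : 5 ≤ k
  swap
  · -- small cases k = 2, 3, 4
    interval_cases k
    · -- k = 2
      have hset : ((Finset.Icc 2 (2*2-1)).filter Nat.Prime) = {2, 3} := by decide
      rw [hset, Finset.sum_insert (by decide), Finset.sum_singleton]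
      have h1 : 1 - (Real.log 2)⁻¹ ≤ Real.log (Real.log 2) := by
        have h := Real.log_le_sub_one_of_pos (show (0:ℝ) < (Real.log 2)⁻¹ by positivity)
        rw [Real.log_inv] at h
        linarith
      have h2 : (0:ℝ) ≤ 2/(3*Real.log 2) := by positivity
      have e2 : 2/Real.log 2 = 2*(Real.log 2)⁻¹ := by rw [div_eq_mul_inv]
      have : (1:ℝ)/(2*(2:ℕ) - (2:ℕ)) + 1/(2*(2:ℕ) - (3:ℕ)) = 3/2 := by norm_num
      push_cast at this ⊢
      rw [this, e2]
      linarith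
    · -- k = 3
      have hset : ((Finset.Icc 3 (2*3-1)).filter Nat.Prime) = {3, 5} := by decide
      rw [hset, Finset.sum_insert (by decide), Finset.sum_singleton]
      have h1 : 0 ≤ Real.log (Real.log 3) := Real.log_nonneg (by linarith)
      have h2 : (0:ℝ) ≤ 2/(3*Real.log 2) := by positivity
      have h3 : (0:ℝ) ≤ 2/Real.log 3 := by positivity
      have : (1:ℝ)/(2*(3:ℕ) - (3:ℕ)) + 1/(2*(3:ℕ) - (5:ℕ)) = 4/3 := by norm_num
      push_cast at this ⊢
      rw [this]
      linarith
    · -- k = 4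
      have hset : ((Finset.Icc 4 (2*4-1)).filter Nat.Prime) = {5, 7} := by decide
      rw [hset, Finset.sum_insert (by decide), Finset.sum_singleton]
      have hl4 : 1 ≤ Real.log 4 := by
        have := Real.log_le_log (show (0:ℝ) < 3 by norm_num) (show (3:ℝ) ≤ 4 by norm_num)
        linarith
      have h1 : 0 ≤ Real.log (Real.log 4) := Real.log_nonneg hl4
      have h2 : (0:ℝ) ≤ 2/(3*Real.log 2) := by positivity
      have h3 : (0:ℝ) ≤ 2/Real.log 4 := by positivity
      have : (1:ℝ)/(2*(4:ℕ) - (5:ℕ)) + 1/(2*(4:ℕ) - (7:ℕ)) = 4/3 := by norm_num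
      push_cast at this ⊢
      rw [this]
      linarith
  · -- main case k ≥ 5
    set g : ℕ → ℝ := fun i => if (2*k - (i+1)).Prime then (1:ℝ) else 0 with hg
    set f : ℕ → ℝ := fun i => 1/((i:ℝ)+1) with hf
    have hgnn : ∀ i, 0 ≤ g i := by
      intro i; simp only [hg]; positivity
    have hgle : ∀ i, g i ≤ 1 := by
      intro i; simp only [hg]; split <;> norm_num
    have hGnn : ∀ m, 0 ≤ ∑ i ∈ range m, g i :=
      fun m => Finset.sum_nonneg fun i _ => hgnn i
    have hGle : ∀ m : ℕ, (∑ i ∈ range m, g i) ≤ m := by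
      intro m
      calc ∑ i ∈ range m, g i ≤ ∑ i ∈ range m, (1:ℝ) :=
            Finset.sum_le_sum fun i _ => hgle i
        _ = m := by simp
    have hA : ∀ m : ℕ, 1 ≤ m → m ≤ 2*k - 1 →
        (∑ i ∈ range m, g i) ≤ 2 * ((m:ℝ)+1) / Real.log ((m:ℝ)+1) := by
      intro m h1 h2
      simpa only [hg] using count_bound k hk hMont m h1 h2
    -- reindexing
    have hre : ∑ p ∈ (Finset.Icc k (2 * k - 1)).filter Nat.Prime, (1 : ℝ) / (2 * k - p)
        = ∑ i ∈ range k, f i * g i := by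
      have e1 : ∑ i ∈ range k, f i * g i
          = ∑ i ∈ (range k).filter (fun i => (2*k - (i+1)).Prime), f i := by
        rw [Finset.sum_filter]
        refine Finset.sum_congr rfl fun i _ => ?_
        by_cases h : (2*k - (i+1)).Prime <;> simp [hg, h]
      rw [e1]
      refine Finset.sum_bij' (fun p _ => 2*k - 1 - p) (fun i _ => 2*k - (i+1)) ?_ ?_ ?_ ?_ ?_
      · intro p hp
        simp only [mem_filter, mem_Icc] at hp
        simp only [mem_filter, mem_range]
        constructor
        · omega
        · have : 2*k - (2*k - 1 - p + 1) = p := by omega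
          rw [this]; exact hp.2
      · intro i hi
        simp only [mem_filter, mem_range] at hi
        simp only [mem_filter, mem_Icc]
        exact ⟨⟨by omega, by omega⟩, hi.2⟩
      · intro p hp
        simp only [mem_filter, mem_Icc] at hp
        show 2*k - (2*k - 1 - p + 1) = p
        omega
      · intro i hi
        simp only [mem_filter, mem_range] at hi
        show 2*k - 1 - (2*k - (i+1)) = i
        omega
      · intro p hp
        simp only [mem_filter, mem_Icc] at hp
        simp only [hf]
        rw [show ((2*k - 1 - p : ℕ):ℝ) + 1 = ((2*k - 1 - p + 1 : ℕ):ℝ) by push_cast; ring,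
          show 2*k - 1 - p + 1 = 2*k - p by omega,
          Nat.cast_sub (by omega)]
        push_cast
        ring_nf
    -- summation by parts
    have hbp := Finset.sum_range_by_parts f g k
    simp only [smul_eq_mul] at hbp
    rw [hre, hbp]
    -- facts about k
    have hk3 : (3:ℝ) ≤ k := by exact_mod_cast (by omega : 3 ≤ k)
    have hk5' : (5:ℝ) ≤ k := by exact_mod_cast hk5
    have hlogk : 1 < Real.log k := lt_of_lt_of_le hl3 (Real.log_le_log (by norm_num) hk3)
    have hlogk1 : Real.log k ≤ Real.log ((k:ℝ)+1) := Real.log_le_log (by linarith) (by linarith)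
    -- term 1
    have hfk : f (k-1) = 1/(k:ℝ) := by
      simp only [hf]
      rw [show ((k-1 : ℕ):ℝ) + 1 = (k:ℝ) by
        rw [Nat.cast_sub (by omega)]; ring]
    have hterm1 : f (k-1) * (∑ i ∈ range k, g i) ≤ 2/Real.log k + 1 := by
      have hGk := hA k (by omega) (by omega)
      rw [hfk]
      have hkpos : (0:ℝ) < k := by linarith
      calc (1/(k:ℝ)) * (∑ i ∈ range k, g i)
          ≤ (1/(k:ℝ)) * (2*((k:ℝ)+1)/Real.log ((k:ℝ)+1)) := by
            apply mul_le_mul_of_nonneg_left hGk (by positivity)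
        _ = 2/Real.log ((k:ℝ)+1) + 2/((k:ℝ)*Real.log ((k:ℝ)+1)) := by
            have hkne : (k:ℝ) ≠ 0 := ne_of_gt hkpos
            have hLpos : 0 < Real.log ((k:ℝ)+1) := by linarith
            have hLne : Real.log ((k:ℝ)+1) ≠ 0 := ne_of_gt hLpos
            field_simp
            try ring
        _ ≤ 2/Real.log k + 1 := by
            have p1 : 2/Real.log ((k:ℝ)+1) ≤ 2/Real.log k := by
              gcongr
              all_goals linarith
            have p2 : 2/((k:ℝ)*Real.log ((k:ℝ)+1)) ≤ 1 := by
              rw [div_le_one (by nlinarith)]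
              nlinarith
            linarith
    -- the terms of the by-parts sum
    have hfd : ∀ i : ℕ, f i - f (i+1) = 1/(((i:ℝ)+1)*((i:ℝ)+2)) := by
      intro i
      simp only [hf]
      have h1 : ((i:ℝ)+1) ≠ 0 := by positivity
      have h2 : ((i:ℝ)+2) ≠ 0 := by positivity
      have h3 : (((i+1:ℕ)):ℝ) + 1 = (i:ℝ)+2 := by push_cast; ring
      rw [h3, div_sub_div _ _ h1 h2]
      rw [show (1 * ((i:ℝ) + 2) - ((i:ℝ) + 1) * 1) = 1 by ring]
    have hterm : ∀ i : ℕ, -((f (i+1) - f i) * ∑ j ∈ range (i+1), g j)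
        = (1/(((i:ℝ)+1)*((i:ℝ)+2))) * ∑ j ∈ range (i+1), g j := by
      intro i
      rw [show -((f (i+1) - f i) * ∑ j ∈ range (i+1), g j)
          = (f i - f (i+1)) * ∑ j ∈ range (i+1), g j by ring, hfd]
    have hsum2 : -(∑ i ∈ range (k-1), (f (i+1) - f i) * ∑ j ∈ range (i+1), g j)
        ≤ 13/12 + 2 * Real.log (Real.log k) := by
      rw [← Finset.sum_neg_distrib]
      have hsplit := Finset.sum_range_add_sum_Ico
        (fun i => -((f (i+1) - f i) * ∑ j ∈ range (i+1), g j)) (by omega : 3 ≤ k-1)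
      rw [← hsplit]
      have hsmall : (∑ i ∈ range 3, -((f (i+1) - f i) * ∑ j ∈ range (i+1), g j)) ≤ 13/12 := by
        rw [Finset.sum_range_succ, Finset.sum_range_succ, Finset.sum_range_one]
        have b0 : -((f 1 - f 0) * ∑ j ∈ range 1, g j) ≤ 1/2 := by
          rw [hterm 0]
          have h1 := hGle 1
          push_cast at h1
          norm_num [Finset.sum_range_succ]
          first
          | linarith [hgle 0, hgle 1, hgle 2, hGnn 1, hGnn 2, hGnn 3]
          | nlinarith [hgle 0, hgle 1, hgle 2, hgnn 0, hgnn 1, hgnn 2]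
        have b1 : -((f 2 - f 1) * ∑ j ∈ range 2, g j) ≤ 1/3 := by
          rw [hterm 1]
          have h1 := hGle 2
          push_cast at h1
          norm_num [Finset.sum_range_succ]
          first
          | linarith [hgle 0, hgle 1, hgle 2, hGnn 1, hGnn 2, hGnn 3]
          | nlinarith [hgle 0, hgle 1, hgle 2, hgnn 0, hgnn 1, hgnn 2]
        have b2 : -((f 3 - f 2) * ∑ j ∈ range 3, g j) ≤ 1/4 := by
          rw [hterm 2]
          have h1 := hGle 3
          push_cast at h1
          norm_num [Finset.sum_range_succ]
          first
          | linarith [hgle 0, hgle 1, hgle 2, hGnn 1, hGnn 2, hGnn 3]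
          | nlinarith [hgle 0, hgle 1, hgle 2, hgnn 0, hgnn 1, hgnn 2]
        linarith
      have htail : (∑ i ∈ Ico 3 (k-1), -((f (i+1) - f i) * ∑ j ∈ range (i+1), g j))
          ≤ 2 * Real.log (Real.log k) := by
        have hstep : ∀ i ∈ Ico 3 (k-1), -((f (i+1) - f i) * ∑ j ∈ range (i+1), g j)
            ≤ 2 * Real.log (Real.log ((i:ℝ)+1)) - 2 * Real.log (Real.log (i:ℝ)) := by
          intro i hi
          simp only [mem_Ico] at hi
          have hi3 : (3:ℝ) ≤ i := by exact_mod_cast hi.1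
          have hGi := hA (i+1) (by omega) (by omega)
          have hloglog := loglog_step (i:ℝ) hi3
          have hli2 : 0 < Real.log ((i:ℝ)+2) := by
            apply Real.log_pos; linarith
          rw [hterm i]
          calc (1/(((i:ℝ)+1)*((i:ℝ)+2))) * ∑ j ∈ range (i+1), g j
              ≤ (1/(((i:ℝ)+1)*((i:ℝ)+2))) * (2*((i:ℝ)+2)/Real.log ((i:ℝ)+2)) := by
                apply mul_le_mul_of_nonneg_left _ (by positivity)
                have : ((i+1:ℕ):ℝ) + 1 = (i:ℝ) + 2 := by push_cast; ring
                rw [this] at hGi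
                exact hGi
            _ = 2 * (1/(((i:ℝ)+1) * Real.log ((i:ℝ)+2))) := by
                field_simp
                try ring
            _ ≤ 2 * (Real.log (Real.log ((i:ℝ)+1)) - Real.log (Real.log (i:ℝ))) := by
                linarith
            _ = 2 * Real.log (Real.log ((i:ℝ)+1)) - 2 * Real.log (Real.log (i:ℝ)) := by ring
        calc (∑ i ∈ Ico 3 (k-1), -((f (i+1) - f i) * ∑ j ∈ range (i+1), g j))
            ≤ ∑ i ∈ Ico 3 (k-1), (2 * Real.log (Real.log ((i:ℝ)+1)) - 2 * Real.log (Real.log (i:ℝ)))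
              := Finset.sum_le_sum hstep
          _ = 2 * Real.log (Real.log ((k-1:ℕ):ℝ)) - 2 * Real.log (Real.log ((3:ℕ):ℝ)) := by
              set φ : ℕ → ℝ := fun n : ℕ => 2 * Real.log (Real.log (n:ℝ)) with hφ
              have hφe : ∀ i : ℕ, (2 * Real.log (Real.log ((i:ℝ)+1)) - 2 * Real.log (Real.log (i:ℝ)))
                  = φ (i+1) - φ i := by
                intro i; simp only [hφ]; push_cast; ring
              rw [Finset.sum_congr rfl (fun i _ => hφe i),
                Finset.sum_Ico_eq_sub _ (by omega : 3 ≤ k-1),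
                Finset.sum_range_sub φ, Finset.sum_range_sub φ]
              simp only [hφ]
              ring
          _ ≤ 2 * Real.log (Real.log k) := by
              have hm1 : ((k-1:ℕ):ℝ) = (k:ℝ) - 1 := by
                rw [Nat.cast_sub (by omega)]; norm_num
              have h31 : Real.log ((3:ℕ):ℝ) = Real.log 3 := by norm_num
              have hmono : Real.log ((k:ℝ)-1) ≤ Real.log k :=
                Real.log_le_log (by linarith) (by linarith)
              have hpos : 0 < Real.log ((k:ℝ)-1) := Real.log_pos (by linarith)
              have hmono2 : Real.log (Real.log ((k:ℝ)-1)) ≤ Real.log (Real.log (k:ℝ)) :=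
                Real.log_le_log hpos hmono
              have hnn : 0 ≤ Real.log (Real.log ((3:ℕ):ℝ)) := by
                rw [h31]; exact Real.log_nonneg (by linarith)
              rw [hm1]
              linarith
      linarith
    -- combine
    have hfinal : 2/(3*Real.log 2) ≥ 2/3 := by
      rw [ge_iff_le, div_le_div_iff₀ (by norm_num) (by positivity)]
      nlinarith
    linarith
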